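/- An identity is a consequence of {σ1, σμ, σ2}^δ if and only if it is block-balanced, where σ1 is x y t1 x t2 y ≈ y x t1 x t2 y, σμ is x t1 x y t2 y ≈ x t1 y x t2 y, and σ2 is x t1 y t2 x y ≈ x t1 y t2 y x. -/

import Mathlib

/-- Words over a countably infinite alphabet of variables (identified with ℕ). -/
abbrev Wd := List ℕ

/-- Evaluation of a word in a monoid under an assignment of the variables. -/
def evalWord {M : Type*} [Monoid M] (φ : ℕ → M) (u : Wd) : M := (u.map φ).prod

/-- A monoid `M` satisfies the identity `e = (u, v)`. -/
def Sat (M : Type*) [Monoid M] (e : Wd × Wd) : Prop :=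
  ∀ φ : ℕ → M, evalWord φ e.1 = evalWord φ e.2

/-- The identity `e` is a consequence of the set of identities `Γ`:
every monoid satisfying all identities of `Γ` satisfies `e`. -/
def Consequence (Γ : Set (Wd × Wd)) (e : Wd × Wd) : Prop :=
  ∀ (M : Type) [Monoid M], (∀ f ∈ Γ, Sat M f) → Sat M e

/-- The content of a word: the set of variables occurring in it. -/
def conW (u : Wd) : Set ℕ := {x | x ∈ u}

/-- The set of linear (exactly once occurring) variables of a word. -/
def linW (u : Wd) : Set ℕ := {x | u.count x = 1}

/-- The set of non-linear (more than once occurring) variables of a word. -/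
def nonW (u : Wd) : Set ℕ := {x | 2 ≤ u.count x}

/-- `restrict u X` is the word obtained from `u` by deleting all occurrences of
all variables not in `X`. -/
noncomputable def restrict (u : Wd) (X : Set ℕ) : Wd :=
  u.filter (fun a => @decide (a ∈ X) (Classical.propDecidable _))

/-- The closure of a set of identities under deleting variables. -/
def delta (Γ : Set (Wd × Wd)) : Set (Wd × Wd) :=
  {e | ∃ f ∈ Γ, ∃ X : Set ℕ, e = (restrict f.1 X, restrict f.2 X)}

/-- A word is almost-linear if it has at most one non-linear variable. -/
def AlmostLinearW (u : Wd) : Prop := ∀ x y, 2 ≤ u.count x → 2 ≤ u.count y → x = y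

/-- An identity is almost-linear if both of its sides are almost-linear words. -/
def AlmostLinearId (e : Wd × Wd) : Prop := AlmostLinearW e.1 ∧ AlmostLinearW e.2

/-- An identity is regular if both sides have the same content. -/
def RegularId (e : Wd × Wd) : Prop := conW e.1 = conW e.2

/-- A word `u` is an isoterm for a monoid `M` if the only word `v` with
`M ⊨ u ≈ v` is `u` itself. -/
def Isoterm (M : Type*) [Monoid M] (u : Wd) : Prop := ∀ v : Wd, Sat M (u, v) → v = u

/-- An identity `u ≈ v` is block-balanced if `u(x, lin u) = v(x, lin u)`
for every variable `x`. -/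
def BlockBalanced (e : Wd × Wd) : Prop :=
  ∀ x : ℕ, restrict e.1 ({x} ∪ linW e.1) = restrict e.2 ({x} ∪ linW e.1)

/-- A monoid is finitely based: some finite set of its identities implies all of them. -/
def FinitelyBased (S : Type*) [Monoid S] : Prop :=
  ∃ Γ : Set (Wd × Wd), Γ.Finite ∧ (∀ e ∈ Γ, Sat S e) ∧
    ∀ e : Wd × Wd, Sat S e → Consequence Γ e

/-- Index of the first occurrence of a variable in a word. -/
def firstIdx (u : Wd) (x : ℕ) : ℕ := u.idxOf x

/-- Index of the last occurrence of a variable in a word. -/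
def lastIdx (u : Wd) (x : ℕ) : ℕ := u.length - 1 - u.reverse.idxOf x

/-- σ1 : x y t1 x t2 y ≈ y x t1 x t2 y, with x=0, y=1, t1=2, t2=3. -/
def sigma1 : Wd × Wd := ([0,1,2,0,3,1], [1,0,2,0,3,1])

/-- σμ : x t1 x y t2 y ≈ x t1 y x t2 y, with x=0, y=1, t1=2, t2=3. -/
def sigmaMu : Wd × Wd := ([0,2,0,1,3,1], [0,2,1,0,3,1])

/-- σ2 : x t1 y t2 x y ≈ x t1 y t2 y x, with x=0, y=1, t1=2, t2=3. -/
def sigma2 : Wd × Wd := ([0,2,1,3,0,1], [0,2,1,3,1,0])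

open scoped Classical

@[simp] lemma restrict_nil (X : Set ℕ) : restrict [] X = [] := rfl

lemma restrict_cons (a : ℕ) (u : Wd) (X : Set ℕ) :
    restrict (a :: u) X = if a ∈ X then a :: restrict u X else restrict u X := by
  by_cases h : a ∈ X <;> simp [restrict, List.filter_cons, h]

@[simp] lemma restrict_append (u v : Wd) (X : Set ℕ) :
    restrict (u ++ v) X = restrict u X ++ restrict v X := by
  simp [restrict, List.filter_append]

lemma count_restrict (u : Wd) (X : Set ℕ) (x : ℕ) :
    (restrict u X).count x = if x ∈ X then u.count x else 0 := by
  induction u with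
  | nil => simp
  | cons a u ih =>
    rw [restrict_cons]
    by_cases h : a ∈ X
    · rw [if_pos h, List.count_cons, List.count_cons, ih]
      by_cases hx : x ∈ X
      · rw [if_pos hx, if_pos hx]
      · rw [if_neg hx, if_neg hx]
        have hax : ¬ (a == x) := by
          simp only [beq_iff_eq]; rintro rfl; exact hx h
        simp [hax]
    · rw [if_neg h, ih]
      by_cases hx : x ∈ X
      · rw [if_pos hx, if_pos hx, List.count_cons]
        have hax : ¬ (a == x) := by
          simp only [beq_iff_eq]; rintro rfl; exact h hx
        simp [hax]
      · rw [if_neg hx, if_neg hx]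

lemma restrict_restrict (u : Wd) (A B : Set ℕ) (h : B ⊆ A) :
    restrict (restrict u A) B = restrict u B := by
  induction u with
  | nil => simp
  | cons a u ih =>
    rw [restrict_cons]
    by_cases hA : a ∈ A
    · simp only [if_pos hA, restrict_cons, ih]
    · have hB : a ∉ B := fun hb => hA (h hb)
      simp only [if_neg hA, restrict_cons, if_neg hB, ih]

lemma restrict_congr (u : Wd) (S T : Set ℕ) (h : ∀ z ∈ u, z ∈ S ↔ z ∈ T) :
    restrict u S = restrict u T := by
  induction u with
  | nil => simp
  | cons a u ih =>
    have ih' := ih (fun z hz => h z (List.mem_cons_of_mem a hz))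
    rw [restrict_cons, restrict_cons, ih']
    by_cases hS : a ∈ S
    · rw [if_pos hS, if_pos ((h a List.mem_cons_self).1 hS)]
    · rw [if_neg hS, if_neg (fun hT => hS ((h a List.mem_cons_self).2 hT))]

lemma restrict_univ (u : Wd) : restrict u Set.univ = u := by
  induction u with
  | nil => simp
  | cons a u ih => rw [restrict_cons, if_pos (Set.mem_univ a), ih]

lemma restrict_eq_replicate (u : Wd) (S : Set ℕ) (x : ℕ) (hx : x ∈ S)
    (h : ∀ z ∈ u, z ∈ S → z = x) :
    restrict u S = List.replicate (u.count x) x := by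
  induction u with
  | nil => simp
  | cons a u ih =>
    have ih' := ih (fun z hz => h z (List.mem_cons_of_mem a hz))
    rw [restrict_cons]
    by_cases hS : a ∈ S
    · have : a = x := h a List.mem_cons_self hS
      subst this
      simp [ih', List.count_cons, List.replicate_succ, hS]
    · have : a ≠ x := fun hax => hS (hax ▸ hx)
      simp [ih', List.count_cons, this, hS]

@[simp] lemma evalWord_nil {M : Type*} [Monoid M] (φ : ℕ → M) : evalWord φ [] = 1 := rfl
@[simp] lemma evalWord_cons {M : Type*} [Monoid M] (φ : ℕ → M) (a : ℕ) (u : Wd) :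
    evalWord φ (a :: u) = φ a * evalWord φ u := by simp [evalWord]
@[simp] lemma evalWord_append {M : Type*} [Monoid M] (φ : ℕ → M) (u v : Wd) :
    evalWord φ (u ++ v) = evalWord φ u * evalWord φ v := by simp [evalWord]

def Step (u v : Wd) : Prop :=
  ∃ p x y q, u = p ++ x :: y :: q ∧ v = p ++ y :: x :: q ∧
    2 ≤ u.count x ∧ 2 ≤ u.count y

section
variable {M : Type*} [Monoid M]

lemma step_eval (hs1 : Sat M sigma1) (hsm : Sat M sigmaMu) (hs2 : Sat M sigma2)
    (φ : ℕ → M) {u v : Wd} (h : Step u v) : evalWord φ u = evalWord φ v := by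
  obtain ⟨p, x, y, q, hu, hv, hcx, hcy⟩ := h
  by_cases hxy : x = y
  · rw [hu, hv, hxy]
  -- x and y each occur in p or q
  have hx : x ∈ p ∨ x ∈ q := by
    rw [hu] at hcx
    simp only [List.count_append, List.count_cons] at hcx
    rcases Nat.lt_or_ge 0 (p.count x) with h' | h'
    · exact Or.inl (List.count_pos_iff.1 h')
    · refine Or.inr (List.count_pos_iff.1 ?_)
      have hyx : ¬ (y == x) := by simpa using fun h'' => hxy h''.symm
      simp [hyx] at hcx
      omega
  have hy : y ∈ p ∨ y ∈ q := by
    rw [hu] at hcy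
    simp only [List.count_append, List.count_cons] at hcy
    rcases Nat.lt_or_ge 0 (p.count y) with h' | h'
    · exact Or.inl (List.count_pos_iff.1 h')
    · refine Or.inr (List.count_pos_iff.1 ?_)
      have hxy' : ¬ (x == y) := by simpa using hxy
      simp [hxy'] at hcy
      omega
  rcases hx with hxp | hxq
  · rcases hy with hyp | hyq
    · -- both in p : use sigma2
      obtain ⟨p₁, p₂, rfl⟩ := List.append_of_mem hxp
      by_cases hyp1 : y ∈ p₁
      · -- y before x : roles 0 ↦ y, 1 ↦ x, word is  p₃ y p₄ x p₂ [x y] q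
        obtain ⟨p₃, p₄, rfl⟩ := List.append_of_mem hyp1
        set φ' : ℕ → M := fun n =>
          if n = 0 then φ y else if n = 1 then φ x
          else if n = 2 then evalWord φ p₄ else evalWord φ p₂ with hφ'
        have l1 : evalWord φ ((p₃ ++ y :: p₄) ++ x :: p₂ ++ x :: y :: q) =
            evalWord φ p₃ * (evalWord φ' sigma2.2 * evalWord φ q) := by
          simp [sigma2, hφ', mul_assoc]
        have l2 : evalWord φ ((p₃ ++ y :: p₄) ++ x :: p₂ ++ y :: x :: q) =
            evalWord φ p₃ * (evalWord φ' sigma2.1 * evalWord φ q) := by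
          simp [sigma2, hφ', mul_assoc]
        rw [hu, hv, l1, l2, ← hs2 φ']
      · have hyp2 : y ∈ x :: p₂ := by
          rcases List.mem_append.1 hyp with h' | h'
          · exact absurd h' hyp1
          · exact h'
        have hyp2' : y ∈ p₂ := by
          rcases List.mem_cons.1 hyp2 with h' | h'
          · exact absurd h'.symm hxy
          · exact h'
        obtain ⟨p₃, p₄, rfl⟩ := List.append_of_mem hyp2'
        set φ' : ℕ → M := fun n =>
          if n = 0 then φ x else if n = 1 then φ y
          else if n = 2 then evalWord φ p₃ else evalWord φ p₄ with hφ'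
        have l1 : evalWord φ (p₁ ++ x :: (p₃ ++ y :: p₄) ++ x :: y :: q) =
            evalWord φ p₁ * (evalWord φ' sigma2.1 * evalWord φ q) := by
          simp [sigma2, hφ', mul_assoc]
        have l2 : evalWord φ (p₁ ++ x :: (p₃ ++ y :: p₄) ++ y :: x :: q) =
            evalWord φ p₁ * (evalWord φ' sigma2.2 * evalWord φ q) := by
          simp [sigma2, hφ', mul_assoc]
        rw [hu, hv, l1, l2, hs2 φ']
    · -- x in p, y in q : sigmaMu with roles 0 ↦ x, 1 ↦ y
      obtain ⟨p₁, p₂, rfl⟩ := List.append_of_mem hxp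
      obtain ⟨q₁, q₂, rfl⟩ := List.append_of_mem hyq
      set φ' : ℕ → M := fun n =>
        if n = 0 then φ x else if n = 1 then φ y
        else if n = 2 then evalWord φ p₂ else evalWord φ q₁ with hφ'
      have l1 : evalWord φ ((p₁ ++ x :: p₂) ++ x :: y :: (q₁ ++ y :: q₂)) =
          evalWord φ p₁ * (evalWord φ' sigmaMu.1 * evalWord φ q₂) := by
        simp [sigmaMu, hφ', mul_assoc]
      have l2 : evalWord φ ((p₁ ++ x :: p₂) ++ y :: x :: (q₁ ++ y :: q₂)) =
          evalWord φ p₁ * (evalWord φ' sigmaMu.2 * evalWord φ q₂) := by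
        simp [sigmaMu, hφ', mul_assoc]
      rw [hu, hv, l1, l2, hsm φ']
  · rcases hy with hyp | hyq
    · -- y in p, x in q : sigmaMu with roles 0 ↦ y, 1 ↦ x
      obtain ⟨p₁, p₂, rfl⟩ := List.append_of_mem hyp
      obtain ⟨q₁, q₂, rfl⟩ := List.append_of_mem hxq
      set φ' : ℕ → M := fun n =>
        if n = 0 then φ y else if n = 1 then φ x
        else if n = 2 then evalWord φ p₂ else evalWord φ q₁ with hφ'
      have l1 : evalWord φ ((p₁ ++ y :: p₂) ++ x :: y :: (q₁ ++ x :: q₂)) =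
          evalWord φ p₁ * (evalWord φ' sigmaMu.2 * evalWord φ q₂) := by
        simp [sigmaMu, hφ', mul_assoc]
      have l2 : evalWord φ ((p₁ ++ y :: p₂) ++ y :: x :: (q₁ ++ x :: q₂)) =
          evalWord φ p₁ * (evalWord φ' sigmaMu.1 * evalWord φ q₂) := by
        simp [sigmaMu, hφ', mul_assoc]
      rw [hu, hv, l1, l2, ← hsm φ']
    · -- both in q : sigma1
      obtain ⟨q₁, q₂, rfl⟩ := List.append_of_mem hxq
      by_cases hyq1 : y ∈ q₁
      · -- y before x in q : roles 0 ↦ y, 1 ↦ x ; u mid is x y ... y ... x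
        obtain ⟨q₃, q₄, rfl⟩ := List.append_of_mem hyq1
        set φ' : ℕ → M := fun n =>
          if n = 0 then φ y else if n = 1 then φ x
          else if n = 2 then evalWord φ q₃ else evalWord φ q₄ with hφ'
        have l1 : evalWord φ (p ++ x :: y :: ((q₃ ++ y :: q₄) ++ x :: q₂)) =
            evalWord φ p * (evalWord φ' sigma1.2 * evalWord φ q₂) := by
          simp [sigma1, hφ', mul_assoc]
        have l2 : evalWord φ (p ++ y :: x :: ((q₃ ++ y :: q₄) ++ x :: q₂)) =
            evalWord φ p * (evalWord φ' sigma1.1 * evalWord φ q₂) := by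
          simp [sigma1, hφ', mul_assoc]
        rw [hu, hv, l1, l2, ← hs1 φ']
      · have hyq2 : y ∈ q₂ := by
          rcases List.mem_append.1 hyq with h' | h'
          · exact absurd h' hyq1
          · rcases List.mem_cons.1 h' with h'' | h''
            · exact absurd h''.symm hxy
            · exact h''
        obtain ⟨q₃, q₄, rfl⟩ := List.append_of_mem hyq2
        set φ' : ℕ → M := fun n =>
          if n = 0 then φ x else if n = 1 then φ y
          else if n = 2 then evalWord φ q₁ else evalWord φ q₃ with hφ'
        have l1 : evalWord φ (p ++ x :: y :: (q₁ ++ x :: (q₃ ++ y :: q₄))) =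
            evalWord φ p * (evalWord φ' sigma1.1 * evalWord φ q₄) := by
          simp [sigma1, hφ', mul_assoc]
        have l2 : evalWord φ (p ++ y :: x :: (q₁ ++ x :: (q₃ ++ y :: q₄))) =
            evalWord φ p * (evalWord φ' sigma1.2 * evalWord φ q₄) := by
          simp [sigma1, hφ', mul_assoc]
        rw [hu, hv, l1, l2, hs1 φ']
end

lemma Step.count {u v : Wd} (h : Step u v) (z : ℕ) : u.count z = v.count z := by
  obtain ⟨p, x, y, q, hu, hv, _, _⟩ := h
  subst hu; subst hv
  exact ((List.Perm.append_left p (List.Perm.swap y x q)).count_eq z)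

lemma chain_count {u v : Wd} (h : Relation.ReflTransGen Step u v) (z : ℕ) :
    u.count z = v.count z := by
  induction h with
  | refl => rfl
  | tail _ hstep ih => exact ih.trans (hstep.count z)

section
variable {M : Type*} [Monoid M]
lemma chain_eval (hs1 : Sat M sigma1) (hsm : Sat M sigmaMu) (hs2 : Sat M sigma2)
    (φ : ℕ → M) {u v : Wd} (h : Relation.ReflTransGen Step u v) :
    evalWord φ u = evalWord φ v := by
  induction h with
  | refl => rfl
  | tail _ hstep ih => exact ih.trans (step_eval hs1 hsm hs2 φ hstep)
end

lemma bubble (b : ℕ) : ∀ (B P Q : Wd),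
    2 ≤ ((P ++ B ++ b :: Q).count b) → (∀ a ∈ B, 2 ≤ (P ++ B ++ b :: Q).count a) →
    Relation.ReflTransGen Step (P ++ B ++ b :: Q) (P ++ b :: (B ++ Q)) := by
  intro B
  induction B with
  | nil => intro P Q _ _; simpa using Relation.ReflTransGen.refl
  | cons a B ih =>
    intro P Q hb ha
    have hword : P ++ (a :: B) ++ b :: Q = (P ++ [a]) ++ B ++ b :: Q := by
      simp
    have c1 : Relation.ReflTransGen Step ((P ++ [a]) ++ B ++ b :: Q)
        ((P ++ [a]) ++ b :: (B ++ Q)) := by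
      apply ih
      · rw [← hword]; exact hb
      · intro a' ha'
        rw [← hword]
        exact ha a' (List.mem_cons_of_mem a ha')
    have c2 : Step ((P ++ [a]) ++ b :: (B ++ Q)) (P ++ b :: (a :: B ++ Q)) := by
      refine ⟨P, a, b, B ++ Q, by simp, by simp, ?_, ?_⟩
      · have := chain_count c1 a
        rw [← this, ← hword]
        exact ha a List.mem_cons_self
      · have := chain_count c1 b
        rw [← this, ← hword]
        exact hb
    rw [hword]
    exact c1.tail c2

lemma blockperm : ∀ (B' B P Q : Wd), B.Perm B' →
    (∀ a ∈ B, 2 ≤ (P ++ B ++ Q).count a) →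
    Relation.ReflTransGen Step (P ++ B ++ Q) (P ++ B' ++ Q) := by
  intro B'
  induction B' with
  | nil =>
    intro B P Q hperm _
    rw [hperm.eq_nil]
  | cons b B'' ih =>
    intro B P Q hperm ha
    have hb : b ∈ B := hperm.mem_iff.2 List.mem_cons_self
    obtain ⟨B₁, B₂, rfl⟩ := List.append_of_mem hb
    have hmid : (B₁ ++ b :: B₂).Perm (b :: (B₁ ++ B₂)) := List.perm_middle
    have hperm' : (B₁ ++ B₂).Perm B'' :=
      (List.perm_cons b).1 (hmid.symm.trans hperm)
    have hword : P ++ (B₁ ++ b :: B₂) ++ Q = P ++ B₁ ++ b :: (B₂ ++ Q) := by simp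
    have c1 : Relation.ReflTransGen Step (P ++ B₁ ++ b :: (B₂ ++ Q))
        (P ++ b :: (B₁ ++ (B₂ ++ Q))) := by
      apply bubble
      · rw [← hword]
        exact ha b hb
      · intro a' ha'
        rw [← hword]
        exact ha a' (List.mem_append.2 (Or.inl ha'))
    have hword2 : P ++ b :: (B₁ ++ (B₂ ++ Q)) = (P ++ [b]) ++ (B₁ ++ B₂) ++ Q := by simp
    have c2 : Relation.ReflTransGen Step ((P ++ [b]) ++ (B₁ ++ B₂) ++ Q)
        ((P ++ [b]) ++ B'' ++ Q) := by
      apply ih _ _ _ hperm'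
      intro a' ha'
      have hpermw : (P ++ (B₁ ++ b :: B₂) ++ Q).Perm ((P ++ [b]) ++ (B₁ ++ B₂) ++ Q) := by
        have h0 := (hmid.append_left P).append_right Q
        simp only [List.append_assoc] at h0 ⊢
        simpa using h0
      rw [← hpermw.count_eq]
      have hmem : a' ∈ B₁ ++ b :: B₂ := by
        rcases List.mem_append.1 ha' with h' | h'
        · exact List.mem_append.2 (Or.inl h')
        · exact List.mem_append.2 (Or.inr (List.mem_cons_of_mem b h'))
      exact ha a' hmem
    have hword3 : (P ++ [b]) ++ B'' ++ Q = P ++ (b :: B'') ++ Q := by simp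
    rw [hword, ← hword3]
    exact (c1.trans (hword2 ▸ c2))


lemma restrict_eq_nil {u : Wd} {L : Set ℕ} (h : ∀ z ∈ u, z ∉ L) : restrict u L = [] := by
  induction u with
  | nil => rfl
  | cons a u ih =>
    rw [restrict_cons, if_neg (h a List.mem_cons_self)]
    exact ih (fun z hz => h z (List.mem_cons_of_mem a hz))

lemma split_first (L : Set ℕ) : ∀ u : Wd,
    (∀ z ∈ u, z ∉ L) ∨ ∃ B l u₁, u = B ++ l :: u₁ ∧ l ∈ L ∧ ∀ z ∈ B, z ∉ L := by
  intro u
  induction u with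
  | nil => exact Or.inl (by simp)
  | cons a u ih =>
    by_cases ha : a ∈ L
    · exact Or.inr ⟨[], a, u, rfl, ha, by simp⟩
    · rcases ih with h | ⟨B, l, u₁, rfl, hl, hB⟩
      · refine Or.inl ?_
        intro z hz
        rcases List.mem_cons.1 hz with rfl | hz'
        · exact ha
        · exact h z hz'
      · refine Or.inr ⟨a :: B, l, u₁, rfl, hl, ?_⟩
        intro z hz
        rcases List.mem_cons.1 hz with rfl | hz'
        · exact ha
        · exact hB z hz'

lemma replicate_cons_inj {x l : ℕ} (hxl : x ≠ l) : ∀ {m m' : ℕ} {w w' : Wd},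
    List.replicate m x ++ l :: w = List.replicate m' x ++ l :: w' → m = m' ∧ w = w' := by
  intro m
  induction m with
  | zero =>
    intro m' w w' h
    cases m' with
    | zero => simpa using h
    | succ m' =>
      rw [List.replicate_succ] at h
      simp only [List.replicate_zero, List.nil_append, List.cons_append, List.cons.injEq] at h
      exact absurd h.1.symm hxl
  | succ m ih =>
    intro m' w w' h
    cases m' with
    | zero =>
      rw [List.replicate_succ] at h
      simp only [List.replicate_zero, List.nil_append, List.cons_append, List.cons.injEq] at h
      exact absurd h.1 hxl
    | succ m' =>
      rw [List.replicate_succ, List.replicate_succ] at h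
      simp only [List.cons_append, List.cons.injEq, true_and] at h
      obtain ⟨h1, h2⟩ := ih h
      exact ⟨by omega, h2⟩

lemma lemD : ∀ (n : ℕ) (u v P : Wd) (L : Set ℕ), u.length ≤ n →
    (∀ z, u.count z = v.count z) →
    (∀ x, restrict u ({x} ∪ L) = restrict v ({x} ∪ L)) →
    (∀ x ∈ u, x ∉ L → 2 ≤ (P ++ u).count x) →
    Relation.ReflTransGen Step (P ++ u) (P ++ v) := by
  intro n
  induction n with
  | zero =>
    intro u v P L hlen h1 h2 h3
    have hu : u = [] := List.eq_nil_of_length_eq_zero (Nat.le_zero.1 hlen)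
    subst hu
    have hv : v = [] := by
      rcases v with _ | ⟨a, v⟩
      · rfl
      · exfalso
        have := h1 a
        simp [List.count_cons] at this
    subst hv
    exact Relation.ReflTransGen.refl
  | succ n ih =>
    intro u v P L hlen h1 h2 h3
    rcases split_first L u with hNoL | ⟨B, l, u₁, hu, hlL, hB⟩
    · -- no linear letters in u : u and v are permutations of nonlinear letters
      have hperm : u.Perm v := List.perm_iff_count.2 h1
      have := blockperm v u P [] hperm ?_
      · simpa using this
      · intro a haB
        have := h3 a haB (hNoL a haB)
        simpa using this
    · -- u = B ++ l :: u₁ with l linear-marked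
      have hLset : ({l} : Set ℕ) ∪ L = L :=
        Set.union_eq_self_of_subset_left (Set.singleton_subset_iff.2 hlL)
      have hL : restrict u L = restrict v L := by
        have := h2 l
        rwa [hLset] at this
      have hresu : restrict u L = l :: restrict u₁ L := by
        rw [hu, restrict_append, restrict_eq_nil hB, restrict_cons, if_pos hlL,
          List.nil_append]
      rcases split_first L v with hNoLv | ⟨B', l', v₁, hv, hl'L, hB'⟩
      · exfalso
        have : restrict v L = [] := restrict_eq_nil hNoLv
        rw [this, hresu] at hL
        exact List.cons_ne_nil _ _ hL
      have hresv : restrict v L = l' :: restrict v₁ L := by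
        rw [hv, restrict_append, restrict_eq_nil hB', restrict_cons, if_pos hl'L,
          List.nil_append]
      have hll' : l = l' ∧ restrict u₁ L = restrict v₁ L := by
        rw [hresu, hresv] at hL
        exact ⟨by injection hL, by injection hL⟩
      obtain ⟨rfl, hres1⟩ := hll'
      -- block counts
      have hkey : ∀ z, z ∉ L →
          B.count z = B'.count z ∧ restrict u₁ ({z} ∪ L) = restrict v₁ ({z} ∪ L) := by
        intro z hzL
        have hzl : z ≠ l := fun h => hzL (h ▸ hlL)
        have hlz : l ∈ ({z} : Set ℕ) ∪ L := Or.inr hlL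
        have hBz : restrict B ({z} ∪ L) = List.replicate (B.count z) z := by
          apply restrict_eq_replicate B _ z (Or.inl rfl)
          intro z' hz' hz'S
          rcases hz'S with h' | h'
          · exact h'
          · exact absurd h' (hB z' hz')
        have hB'z : restrict B' ({z} ∪ L) = List.replicate (B'.count z) z := by
          apply restrict_eq_replicate B' _ z (Or.inl rfl)
          intro z' hz' hz'S
          rcases hz'S with h' | h'
          · exact h'
          · exact absurd h' (hB' z' hz')
        have heq := h2 z
        rw [hu, hv, restrict_append, restrict_append, restrict_cons, restrict_cons,
          if_pos hlz, if_pos hlz, hBz, hB'z] at heq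
        exact replicate_cons_inj hzl heq
      have hBc : ∀ z, B.count z = B'.count z := by
        intro z
        by_cases hz : z ∈ L
        · have h0 : z ∉ B := fun hmem => hB z hmem hz
          have h0' : z ∉ B' := fun hmem => hB' z hmem hz
          rw [List.count_eq_zero.2 h0, List.count_eq_zero.2 h0']
        · exact (hkey z hz).1
      have hperm : B.Perm B' := List.perm_iff_count.2 hBc
      have h1' : ∀ z, u₁.count z = v₁.count z := by
        intro z
        have := h1 z
        rw [hu, hv] at this
        simp only [List.count_append, List.count_cons, hBc z] at this
        omega
      have h2' : ∀ x, restrict u₁ ({x} ∪ L) = restrict v₁ ({x} ∪ L) := by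
        intro x
        by_cases hx : x ∈ L
        · have : ({x} : Set ℕ) ∪ L = L :=
            Set.union_eq_self_of_subset_left (Set.singleton_subset_iff.2 hx)
          rw [this]
          exact hres1
        · exact (hkey x hx).2
      -- assemble the chain
      have hlen' : u₁.length ≤ n := by
        rw [hu] at hlen
        simp only [List.length_append, List.length_cons] at hlen
        omega
      have chain1 : Relation.ReflTransGen Step (P ++ u) (P ++ B' ++ (l :: u₁)) := by
        have := blockperm B' B P (l :: u₁) hperm ?_
        · rw [hu, ← List.append_assoc]
          exact this
        · intro a haB
          have haU : a ∈ u := by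
            rw [hu]; exact List.mem_append.2 (Or.inl haB)
          have := h3 a haU (hB a haB)
          rw [hu] at this
          simpa [List.append_assoc] using this
      have chain2 : Relation.ReflTransGen Step ((P ++ B' ++ [l]) ++ u₁)
          ((P ++ B' ++ [l]) ++ v₁) := by
        apply ih u₁ v₁ (P ++ B' ++ [l]) L hlen' h1' h2'
        intro x hx hxL
        have hpw : ((P ++ B' ++ [l]) ++ u₁).Perm (P ++ u) := by
          rw [hu]
          have hp0 : (B' ++ (l :: u₁)).Perm (B ++ (l :: u₁)) :=
            hperm.symm.append_right _
          have := hp0.append_left P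
          simp only [List.append_assoc] at this ⊢
          simpa using this
        rw [hpw.count_eq]
        have hxU : x ∈ u := by
          rw [hu]
          exact List.mem_append.2 (Or.inr (List.mem_cons_of_mem l hx))
        exact h3 x hxU hxL
      have heq1 : P ++ B' ++ (l :: u₁) = (P ++ B' ++ [l]) ++ u₁ := by simp
      have heq2 : (P ++ B' ++ [l]) ++ v₁ = P ++ v := by
        rw [hv]; simp
      rw [← heq2]
      exact chain1.trans (heq1 ▸ chain2)

-- new part
def RR (u v : Wd) : Prop :=
  (∀ z, u.count z = v.count z) ∧ ∀ x, restrict u ({x} ∪ linW u) = restrict v ({x} ∪ linW u)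

lemma linW_eq_of_counts {u v : Wd} (h : ∀ z, u.count z = v.count z) : linW u = linW v := by
  ext z; simp only [linW, Set.mem_setOf_eq, h z]


lemma RR.refl (u : Wd) : RR u u := ⟨fun _ => rfl, fun _ => rfl⟩

lemma RR.symm {u v : Wd} (h : RR u v) : RR v u := by
  refine ⟨fun z => (h.1 z).symm, fun x => ?_⟩
  rw [← linW_eq_of_counts h.1]
  exact (h.2 x).symm

lemma RR.trans {u v w : Wd} (h1 : RR u v) (h2 : RR v w) : RR u w := by
  refine ⟨fun z => (h1.1 z).trans (h2.1 z), fun x => ?_⟩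
  rw [h1.2 x, linW_eq_of_counts h1.1]
  exact h2.2 x

lemma RR.restrict_lin {u v : Wd} (h : RR u v) (x : ℕ) (Y : Set ℕ) (hY : Y ⊆ linW u) :
    restrict u ({x} ∪ Y) = restrict v ({x} ∪ Y) := by
  have hsub : ({x} ∪ Y : Set ℕ) ⊆ {x} ∪ linW u :=
    Set.union_subset_union_right _ hY
  rw [← restrict_restrict u ({x} ∪ linW u) ({x} ∪ Y) hsub, h.2 x,
    restrict_restrict v ({x} ∪ linW u) ({x} ∪ Y) hsub]

lemma mem_count_pos {u : Wd} {z : ℕ} (h : z ∈ u) : 1 ≤ u.count z :=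
  List.count_pos_iff.2 h

lemma RR.restrict_set {u v : Wd} (h : RR u v) (x : ℕ) (S : Set ℕ)
    (hS : ∀ z ∈ S, z ≠ x → (z ∈ u ∨ z ∈ v) → u.count z = 1) :
    restrict u ({x} ∪ S) = restrict v ({x} ∪ S) := by
  have key : ∀ (w : Wd), (∀ z ∈ w, z ∈ u ∨ z ∈ v) →
      restrict w ({x} ∪ S) = restrict w ({x} ∪ (S ∩ linW u)) := by
    intro w hw
    apply restrict_congr
    intro z hz
    simp only [Set.mem_union, Set.mem_singleton_iff, Set.mem_inter_iff]
    constructor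
    · rintro (hzx | hzS)
      · exact Or.inl hzx
      · rcases Classical.em (z = x) with rfl | hne
        · exact Or.inl rfl
        · exact Or.inr ⟨hzS, hS z hzS hne (hw z hz)⟩
    · rintro (hzx | ⟨hzS, _⟩)
      · exact Or.inl hzx
      · exact Or.inr hzS
  rw [key u (fun z hz => Or.inl hz), key v (fun z hz => Or.inr hz)]
  exact h.restrict_lin x _ (Set.inter_subset_right)

lemma count_one_of_append_left {w u : Wd} {z : ℕ} (hz : z ∈ u)
    (h : (w ++ u).count z = 1) : u.count z = 1 := by
  rw [List.count_append] at h
  have := mem_count_pos hz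
  omega

lemma RR.append_left (w : Wd) {u v : Wd} (h : RR u v) : RR (w ++ u) (w ++ v) := by
  constructor
  · intro z; simp [List.count_append, h.1 z]
  · intro x
    rw [restrict_append, restrict_append]
    congr 1
    apply h.restrict_set x
    intro z hz hne hmem
    have hz1 : (w ++ u).count z = 1 := hz
    rcases hmem with hzu | hzv
    · exact count_one_of_append_left hzu hz1
    · have hzu : z ∈ u := by
        have := mem_count_pos hzv
        rw [← h.1 z] at this
        exact List.count_pos_iff.1 this
      exact count_one_of_append_left hzu hz1

lemma RR.append_right (w : Wd) {u v : Wd} (h : RR u v) : RR (u ++ w) (v ++ w) := by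
  constructor
  · intro z; simp [List.count_append, h.1 z]
  · intro x
    rw [restrict_append, restrict_append]
    congr 1
    apply h.restrict_set x
    intro z hz hne hmem
    have hz1 : (u ++ w).count z = 1 := hz
    rw [List.count_append] at hz1
    have hmem' : z ∈ u := by
      rcases hmem with hzu | hzv
      · exact hzu
      · have := mem_count_pos hzv
        rw [← h.1 z] at this
        exact List.count_pos_iff.1 this
    have := mem_count_pos hmem'
    omega

lemma RR.append {u v u' v' : Wd} (h : RR u v) (h' : RR u' v') : RR (u ++ u') (v ++ v') :=
  (h.append_right u').trans (h'.append_left v)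


-- the quotient monoid
instance wdSetoid : Setoid Wd := ⟨RR, RR.refl, fun h => h.symm, fun h h' => h.trans h'⟩

abbrev QW := Quotient wdSetoid

instance : Monoid QW where
  mul := Quotient.map₂ (· ++ ·) (fun _ _ h _ _ h' => h.append h')
  one := ⟦[]⟧
  mul_assoc a b c := Quotient.inductionOn₃ a b c (fun a b c => by
    show (⟦(a ++ b) ++ c⟧ : QW) = ⟦a ++ (b ++ c)⟧
    rw [List.append_assoc])
  one_mul a := Quotient.inductionOn a (fun a => by
    show (⟦[] ++ a⟧ : QW) = ⟦a⟧
    rw [List.nil_append])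
  mul_one a := Quotient.inductionOn a (fun a => by
    show (⟦a ++ []⟧ : QW) = ⟦a⟧
    rw [List.append_nil])

lemma QW.mk_mul (a b : Wd) : (⟦a⟧ : QW) * (⟦b⟧ : QW) = (⟦a ++ b⟧ : QW) := rfl

lemma evalWord_mk (u : Wd) : evalWord (fun n => (⟦[n]⟧ : QW)) u = ⟦u⟧ := by
  induction u with
  | nil => rfl
  | cons a u ih => rw [evalWord_cons, ih, QW.mk_mul, List.singleton_append]

def substW (g : ℕ → Wd) (u : Wd) : Wd := (u.map g).flatten

@[simp] lemma substW_nil (g : ℕ → Wd) : substW g [] = [] := rfl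
@[simp] lemma substW_cons (g : ℕ → Wd) (a : ℕ) (u : Wd) :
    substW g (a :: u) = g a ++ substW g u := by simp [substW]

lemma evalWord_eq_mk_substW (ψ : ℕ → QW) (u : Wd) :
    evalWord ψ u = ⟦substW (fun n => (ψ n).out) u⟧ := by
  induction u with
  | nil => rfl
  | cons a u ih =>
    rw [evalWord_cons, ih, substW_cons, ← QW.mk_mul]
    congr 1
    exact (Quotient.out_eq _).symm

lemma substW_restrict (g : ℕ → Wd) (X : Set ℕ) (u : Wd) :
    substW g (restrict u X) = substW (fun n => if n ∈ X then g n else []) u := by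
  induction u with
  | nil => rfl
  | cons a u ih =>
    rw [restrict_cons]
    by_cases h : a ∈ X
    · rw [if_pos h, substW_cons, ih, substW_cons, if_pos h]
    · rw [if_neg h, ih, substW_cons, if_neg h, List.nil_append]

lemma RR.swap (p a b q : Wd) (h : ∀ z ∈ a ++ b, 2 ≤ (p ++ a ++ b ++ q).count z) :
    RR (p ++ a ++ b ++ q) (p ++ b ++ a ++ q) := by
  have hcnt : ∀ z, (p ++ a ++ b ++ q).count z = (p ++ b ++ a ++ q).count z := by
    intro z; simp [List.count_append]; omega
  refine ⟨hcnt, fun x => ?_⟩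
  set S : Set ℕ := {x} ∪ linW (p ++ a ++ b ++ q) with hS
  have hx : x ∈ S := Or.inl rfl
  have ha : ∀ z ∈ a, z ∈ S → z = x := by
    intro z hz hzS
    rcases hzS with hzx | hzl
    · exact hzx
    · have h2 := h z (List.mem_append.2 (Or.inl hz))
      have h1 : (p ++ a ++ b ++ q).count z = 1 := hzl
      omega
  have hb : ∀ z ∈ b, z ∈ S → z = x := by
    intro z hz hzS
    rcases hzS with hzx | hzl
    · exact hzx
    · have h2 := h z (List.mem_append.2 (Or.inr hz))
      have h1 : (p ++ a ++ b ++ q).count z = 1 := hzl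
      omega
  rw [restrict_append, restrict_append, restrict_append, restrict_append,
    restrict_append, restrict_append,
    restrict_eq_replicate a S x hx ha, restrict_eq_replicate b S x hx hb]
  simp only [List.append_assoc]
  congr 1
  rw [← List.append_assoc, ← List.append_assoc, ← List.replicate_add,
    ← List.replicate_add, Nat.add_comm]


lemma rr_sigma1 (g : ℕ → Wd) : RR (substW g sigma1.1) (substW g sigma1.2) := by
  have e1 : substW g sigma1.1 = [] ++ g 0 ++ g 1 ++ (g 2 ++ (g 0 ++ (g 3 ++ g 1))) := by
    simp [sigma1, substW, List.append_assoc]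
  have e2 : substW g sigma1.2 = [] ++ g 1 ++ g 0 ++ (g 2 ++ (g 0 ++ (g 3 ++ g 1))) := by
    simp [sigma1, substW, List.append_assoc]
  rw [e1, e2]
  apply RR.swap
  intro z hz
  have hz' : 1 ≤ (g 0).count z + (g 1).count z := by
    rcases List.mem_append.1 hz with h | h
    · have := mem_count_pos h; omega
    · have := mem_count_pos h; omega
  simp only [List.count_append, List.count_nil]
  omega

lemma rr_sigmaMu (g : ℕ → Wd) : RR (substW g sigmaMu.1) (substW g sigmaMu.2) := by
  have e1 : substW g sigmaMu.1 = (g 0 ++ g 2) ++ g 0 ++ g 1 ++ (g 3 ++ g 1) := by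
    simp [sigmaMu, substW, List.append_assoc]
  have e2 : substW g sigmaMu.2 = (g 0 ++ g 2) ++ g 1 ++ g 0 ++ (g 3 ++ g 1) := by
    simp [sigmaMu, substW, List.append_assoc]
  rw [e1, e2]
  apply RR.swap
  intro z hz
  have hz' : 1 ≤ (g 0).count z + (g 1).count z := by
    rcases List.mem_append.1 hz with h | h
    · have := mem_count_pos h; omega
    · have := mem_count_pos h; omega
  simp only [List.count_append, List.count_nil]
  omega

lemma rr_sigma2 (g : ℕ → Wd) : RR (substW g sigma2.1) (substW g sigma2.2) := by
  have e1 : substW g sigma2.1 = (g 0 ++ g 2 ++ g 1 ++ g 3) ++ g 0 ++ g 1 ++ [] := by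
    simp [sigma2, substW, List.append_assoc]
  have e2 : substW g sigma2.2 = (g 0 ++ g 2 ++ g 1 ++ g 3) ++ g 1 ++ g 0 ++ [] := by
    simp [sigma2, substW, List.append_assoc]
  rw [e1, e2]
  apply RR.swap
  intro z hz
  have hz' : 1 ≤ (g 0).count z + (g 1).count z := by
    rcases List.mem_append.1 hz with h | h
    · have := mem_count_pos h; omega
    · have := mem_count_pos h; omega
  simp only [List.count_append, List.count_nil]
  omega

lemma satQ_delta : ∀ f ∈ delta {sigma1, sigmaMu, sigma2}, Sat QW f := by
  rintro f ⟨w, hw, X, rfl⟩ ψ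
  show evalWord ψ (restrict w.1 X) = evalWord ψ (restrict w.2 X)
  rw [evalWord_eq_mk_substW, evalWord_eq_mk_substW, substW_restrict, substW_restrict]
  apply Quotient.sound
  have hw' : w = sigma1 ∨ w = sigmaMu ∨ w = sigma2 := by simpa using hw
  rcases hw' with rfl | rfl | rfl
  exacts [rr_sigma1 _, rr_sigmaMu _, rr_sigma2 _]

lemma dir_mp (e : Wd × Wd) (h : Consequence (delta {sigma1, sigmaMu, sigma2}) e) :
    BlockBalanced e := by
  have h2 := h QW satQ_delta (fun n => (⟦[n]⟧ : QW))
  rw [show evalWord (fun n => (⟦[n]⟧ : QW)) e.1 = ⟦e.1⟧ from evalWord_mk e.1,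
    show evalWord (fun n => (⟦[n]⟧ : QW)) e.2 = ⟦e.2⟧ from evalWord_mk e.2] at h2
  exact (Quotient.exact h2).2

theorem stmt4 (e : Wd × Wd) :
    Consequence (delta {sigma1, sigmaMu, sigma2}) e ↔ BlockBalanced e := by
  constructor
  · exact dir_mp e
  · intro hBB M _ hΓ φ
    have hsig : ∀ w : Wd × Wd, w ∈ ({sigma1, sigmaMu, sigma2} : Set (Wd × Wd)) →
        Sat M w := by
      intro w hw
      refine hΓ w ⟨w, hw, Set.univ, ?_⟩
      rw [restrict_univ, restrict_univ]
    have hs1 : Sat M sigma1 := hsig sigma1 (by simp)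
    have hsm : Sat M sigmaMu := hsig sigmaMu (by simp)
    have hs2 : Sat M sigma2 := hsig sigma2 (by simp)
    have hcnt : ∀ z, e.1.count z = e.2.count z := by
      intro z
      have hz : z ∈ ({z} : Set ℕ) ∪ linW e.1 := Or.inl rfl
      have c1 := count_restrict e.1 ({z} ∪ linW e.1) z
      have c2 := count_restrict e.2 ({z} ∪ linW e.1) z
      rw [if_pos hz] at c1 c2
      rw [← c1, hBB z, c2]
    have h3 : ∀ x ∈ e.1, x ∉ linW e.1 → 2 ≤ (([] : Wd) ++ e.1).count x := by
      intro x hx hxL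
      have h1 := mem_count_pos hx
      have h2 : e.1.count x ≠ 1 := hxL
      rw [List.nil_append]
      omega
    have chain := lemD e.1.length e.1 e.2 [] (linW e.1) le_rfl hcnt hBB h3
    have := chain_eval hs1 hsm hs2 φ chain
    simpa using this
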